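/- Fix a finite set $J \subset \mathbb{N}$, an integer $d$ with $1 \le d \le |J|$, and $j \in \mathbb{N} \setminus J$. If $p, q \in R_{J,d}$ satisfy $\phi_{J,d}(p) = \phi_{J,d}(q)$, then $\phi_{J\cup\{j\},\,d+1}(\eta_j(p)) = \phi_{J\cup\{j\},\,d+1}(\eta_j(q))$; that is, bracket polynomials that are equal in the bracket ring have lifts that are equal in the bracket ring. -/

import Mathlib

/-- The polynomial ring `R_{J,d}` over `ℂ` with one variable `X_S` for each `d`-element
subset `S ⊆ J`. -/
abbrev BracketRing (J : Finset ℕ) (d : ℕ) : Type :=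
  MvPolynomial {S : Finset ℕ // S ⊆ J ∧ S.card = d} ℂ

/-- The formal bracket `[λ₁ ⋯ λ_d] ∈ R_{J,d}`: zero if the entries are not pairwise
distinct, and otherwise `sign π • X_{{λ₁,…,λ_d}}` where `π` is the permutation sorting
the list into increasing order. -/
noncomputable def fbr (J : Finset ℕ) (d : ℕ) (lam : Fin d → ℕ) : BracketRing J d :=
  if h : Function.Injective lam ∧ ∀ k, lam k ∈ J then
    have hsub : Finset.image lam Finset.univ ⊆ J := by
      intro x hx
      obtain ⟨k, _, rfl⟩ := Finset.mem_image.mp hx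
      exact h.2 k
    have hcard : (Finset.image lam Finset.univ).card = d := by
      rw [Finset.card_image_of_injective _ h.1, Finset.card_univ, Fintype.card_fin]
    let e := (Finset.image lam Finset.univ).orderIsoOfFin hcard
    let π : Fin d → Fin d := fun k =>
      e.symm ⟨lam k, Finset.mem_image_of_mem _ (Finset.mem_univ k)⟩
    have hπ : Function.Bijective π := by
      apply Finite.injective_iff_bijective.mp
      intro p q hpq
      exact h.1 (congrArg Subtype.val (e.symm.injective hpq))
    ((Equiv.Perm.sign (Equiv.ofBijective π hπ) : ℤ)) •
      MvPolynomial.X ⟨Finset.image lam Finset.univ, hsub, hcard⟩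
  else 0

/-- The lift `η_j : R_{J,d} → R_{J∪{j},d+1}`, sending `X_S` (with
`S = {s₁ < ⋯ < s_d}`) to the formal bracket `[s₁ ⋯ s_d j]`. -/
noncomputable def liftEta (J : Finset ℕ) (d : ℕ) (j : ℕ) :
    BracketRing J d →ₐ[ℂ] BracketRing (insert j J) (d + 1) :=
  MvPolynomial.aeval (fun S : {S : Finset ℕ // S ⊆ J ∧ S.card = d} =>
    fbr (insert j J) (d + 1) (fun k =>
      if h : (k : ℕ) < d then S.1.orderEmbOfFin S.2.2 ⟨(k : ℕ), h⟩ else j))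

/-- The generic coordinatization `φ_{J,d}`, sending `X_S` (with `S = {s₁ < ⋯ < s_d}`) to
the determinant of the `d × d` matrix `(x_{i, s_m})`. -/
noncomputable def genCoord (J : Finset ℕ) (d : ℕ) :
    BracketRing J d →ₐ[ℂ] MvPolynomial (ℕ × ℕ) ℂ :=
  MvPolynomial.aeval (fun S : {S : Finset ℕ // S ⊆ J ∧ S.card = d} =>
    Matrix.det (Matrix.of fun i m : Fin d =>
      MvPolynomial.X ((i : ℕ), (S.1.orderEmbOfFin S.2.2 m : ℕ))))






lemma det_border {R : Type*} [CommRing R] (d : ℕ) (M : Matrix (Fin (d+1)) (Fin (d+1)) R) :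
    (M (Fin.last d) (Fin.last d)) ^ d * M.det
      = M (Fin.last d) (Fin.last d) *
        (Matrix.of fun i m : Fin d =>
          M (Fin.last d) (Fin.last d) * M i.castSucc m.castSucc
            - M i.castSucc (Fin.last d) * M (Fin.last d) m.castSucc).det := by
  classical
  set a := M (Fin.last d) (Fin.last d) with ha
  set D : Matrix (Fin (d+1)) (Fin (d+1)) R := Matrix.of fun i l =>
    (if l = i then (if i = Fin.last d then 1 else a) else 0)
      + (if l = Fin.last d then (if i = Fin.last d then 0 else -M i (Fin.last d)) else 0) with hD
  have hDdet : D.det = a ^ d := by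
    rw [Matrix.det_of_upperTriangular (M := D) ?_]
    · rw [Fin.prod_univ_castSucc]
      have h1 : ∀ i : Fin d, D i.castSucc i.castSucc = a := by
        intro i
        simp [hD, (Fin.castSucc_lt_last i).ne]
      have h2 : D (Fin.last d) (Fin.last d) = 1 := by simp [hD]
      simp only [h1, h2, Finset.prod_const, Finset.card_univ, Fintype.card_fin, mul_one]
    · intro i l hl
      have h1 : l ≠ i := by exact fun h => absurd h (by exact_mod_cast hl.ne)
      have h2 : l ≠ Fin.last d := by
        intro h
        exact absurd (h ▸ hl) (by simpa using (Fin.le_last i).not_gt)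
      simp [hD, h1, h2]
  have hN : ∀ i m, (D * M) i m =
      (if i = Fin.last d then 1 else a) * M i m
        + (if i = Fin.last d then 0 else -M i (Fin.last d)) * M (Fin.last d) m := by
    intro i m
    rw [Matrix.mul_apply]
    have key : ∀ l : Fin (d+1), D i l * M l m =
        (if l = i then (if i = Fin.last d then 1 else a) * M i m else 0)
          + (if l = Fin.last d then
              (if i = Fin.last d then 0 else -M i (Fin.last d)) * M (Fin.last d) m else 0) := by
      intro l
      by_cases h2 : l = Fin.last d
      · subst h2
        by_cases h1 : Fin.last d = i
        · subst h1; simp [hD]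
        · simp [hD, h1, Ne.symm h1, add_mul]
      · by_cases h1 : l = i
        · subst h1; simp [hD, h2]
        · simp [hD, h1, h2]
    rw [Finset.sum_congr rfl fun l _ => key l, Finset.sum_add_distrib,
      Finset.sum_ite_eq' Finset.univ i, Finset.sum_ite_eq' Finset.univ (Fin.last d)]
    simp
  have hdetN : (D * M).det = a ^ d * M.det := by
    rw [Matrix.det_mul, hDdet]
  have hcol : ∀ i : Fin (d+1), i ≠ Fin.last d → (D * M) i (Fin.last d) = 0 := by
    intro i hi
    rw [hN i (Fin.last d)]
    simp [hi, mul_comm]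
    rw [ha]; ring
  have hexp : (D * M).det = a * (Matrix.of fun i m : Fin d =>
      a * M i.castSucc m.castSucc - M i.castSucc (Fin.last d) * M (Fin.last d) m.castSucc).det := by
    rw [Matrix.det_succ_column (D * M) (Fin.last d)]
    rw [Finset.sum_eq_single (Fin.last d)]
    · have hll : (D * M) (Fin.last d) (Fin.last d) = a := by rw [hN]; simp; exact ha.symm
      have hsub : (D * M).submatrix (Fin.last d).succAbove (Fin.last d).succAbove
          = Matrix.of fun i m : Fin d =>
            a * M i.castSucc m.castSucc - M i.castSucc (Fin.last d) * M (Fin.last d) m.castSucc := by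
        ext i m
        simp only [Matrix.submatrix_apply, Fin.succAbove_last, Matrix.of_apply]
        rw [hN]
        have hne : i.castSucc ≠ Fin.last d := (Fin.castSucc_lt_last i).ne
        simp only [hne, if_false]
        ring
      rw [hll, hsub]
      have hsign : ((-1 : R)) ^ ((Fin.last d : ℕ) + (Fin.last d : ℕ)) = 1 :=
        Even.neg_one_pow ⟨d, by simp⟩
      rw [hsign, one_mul]
    · intro i _ hi
      rw [hcol i hi]
      ring
    · simp
  rw [← hdetN, hexp]

lemma det_perm_eq {R : Type*} [CommRing R] {n : ℕ} (A B : Matrix (Fin n) (Fin n) R)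
    (σ : Equiv.Perm (Fin n)) (h : ∀ i m, B i m = A i (σ m)) :
    (Equiv.Perm.sign σ : ℤ) • A.det = B.det := by
  have hB : B = A.submatrix id σ := by
    ext i m
    simp [h]
  rw [hB, Matrix.det_permute', zsmul_eq_mul]

open MvPolynomial Matrix in
lemma genCoord_fbr (J' : Finset ℕ) (D : ℕ) (lam : Fin D → ℕ)
    (h1 : Function.Injective lam) (h2 : ∀ k, lam k ∈ J') :
    genCoord J' D (fbr J' D lam)
      = Matrix.det (Matrix.of fun i m : Fin D =>
          (MvPolynomial.X ((i : ℕ), lam m) : MvPolynomial (ℕ × ℕ) ℂ)) := by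
  rw [fbr, dif_pos ⟨h1, h2⟩]
  simp only [map_zsmul, genCoord, MvPolynomial.aeval_X]
  apply det_perm_eq
  intro i m
  simp only [Matrix.of_apply, Equiv.ofBijective_apply]
  congr 2
  rw [← Finset.coe_orderIsoOfFin_apply, OrderIso.apply_symm_apply]

open MvPolynomial Matrix in
lemma key_bracket (J : Finset ℕ) (d : ℕ) (hd : 1 ≤ d) (j : ℕ) (hj : j ∉ J)
    (S : {S : Finset ℕ // S ⊆ J ∧ S.card = d}) :
    MvPolynomial.aeval (fun ik : ℕ × ℕ =>
        (X ((d : ℕ), j) * X ik - X (ik.1, j) * X ((d : ℕ), ik.2) : MvPolynomial (ℕ × ℕ) ℂ))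
      (genCoord J d (MvPolynomial.X S))
    = X ((d : ℕ), j) ^ (d - 1)
        * genCoord (insert j J) (d + 1) (liftEta J d j (MvPolynomial.X S)) := by
  classical
  set lam : Fin (d + 1) → ℕ := fun k =>
    if h : (k : ℕ) < d then S.1.orderEmbOfFin S.2.2 ⟨(k : ℕ), h⟩ else j with hlam
  have hmemS : ∀ (k : Fin d), S.1.orderEmbOfFin S.2.2 k ∈ J :=
    fun k => S.2.1 (Finset.orderEmbOfFin_mem _ _ _)
  have h1 : Function.Injective lam := by
    intro k1 k2 h
    simp only [hlam] at h
    by_cases c1 : (k1 : ℕ) < d <;> by_cases c2 : (k2 : ℕ) < d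
    · rw [dif_pos c1, dif_pos c2] at h
      have := (S.1.orderEmbOfFin S.2.2).injective h
      exact Fin.ext (by simpa using congrArg Fin.val this)
    · rw [dif_pos c1, dif_neg c2] at h
      exact absurd (h ▸ hmemS ⟨k1, c1⟩) hj
    · rw [dif_neg c1, dif_pos c2] at h
      exact absurd ((h.symm ▸ hmemS ⟨k2, c2⟩ : j ∈ J)) hj
    · exact Fin.ext (by omega)
  have h2 : ∀ k, lam k ∈ insert j J := by
    intro k
    simp only [hlam]
    by_cases c : (k : ℕ) < d
    · rw [dif_pos c]
      exact Finset.mem_insert_of_mem (hmemS _)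
    · rw [dif_neg c]
      exact Finset.mem_insert_self _ _
  have hlift : liftEta J d j (MvPolynomial.X S) = fbr (insert j J) (d + 1) lam := by
    simp [liftEta, hlam]
  rw [hlift, genCoord_fbr _ _ lam h1 h2]
  set M : Matrix (Fin (d+1)) (Fin (d+1)) (MvPolynomial (ℕ × ℕ) ℂ) :=
    Matrix.of fun i m => MvPolynomial.X ((i : ℕ), lam m) with hM
  have hlast : ∀ i : Fin (d+1), M i (Fin.last d) = MvPolynomial.X ((i : ℕ), j) := by
    intro i
    simp [hM, hlam]
  have hrow : ∀ m : Fin (d+1), M (Fin.last d) m = MvPolynomial.X ((d : ℕ), lam m) := by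
    intro m
    simp [hM]
  have haa : M (Fin.last d) (Fin.last d) = MvPolynomial.X ((d : ℕ), j) := by
    simp [hM, hlam]
  have hborder := det_border d M
  rw [haa] at hborder
  have hLHS : MvPolynomial.aeval (fun ik : ℕ × ℕ =>
        (X ((d : ℕ), j) * X ik - X (ik.1, j) * X ((d : ℕ), ik.2) : MvPolynomial (ℕ × ℕ) ℂ))
      (genCoord J d (MvPolynomial.X S))
      = (Matrix.of fun i m : Fin d =>
          MvPolynomial.X ((d : ℕ), j) * M i.castSucc m.castSucc
            - M i.castSucc (Fin.last d) * M (Fin.last d) m.castSucc).det := by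
    simp only [genCoord, MvPolynomial.aeval_X]
    rw [AlgHom.map_det]
    congr 1
    ext i m
    simp only [AlgHom.mapMatrix_apply, Matrix.map_apply, Matrix.of_apply, MvPolynomial.aeval_X,
      hM, hlam, hlast]
    have hcs : ((m.castSucc : Fin (d+1)) : ℕ) < d := by simpa using m.isLt
    rw [dif_pos hcs]
    simp
  rw [hLHS]
  have hXne : (MvPolynomial.X ((d : ℕ), j) : MvPolynomial (ℕ × ℕ) ℂ) ≠ 0 :=
    MvPolynomial.X_ne_zero _
  apply mul_left_cancel₀ hXne
  rw [← hborder, ← mul_assoc, ← pow_succ', show d - 1 + 1 = d by omega]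

open MvPolynomial Matrix in
lemma det_X_isHomogeneous {n : ℕ} (f : Fin n → Fin n → ℕ × ℕ) :
    ((Matrix.of fun i m : Fin n => (X (f i m) : MvPolynomial (ℕ × ℕ) ℂ)).det).IsHomogeneous n := by
  rw [Matrix.det_apply, ← mem_homogeneousSubmodule]
  apply Submodule.sum_mem
  intro σ _
  rw [Units.smul_def]
  apply (homogeneousSubmodule (ℕ × ℕ) ℂ n).toAddSubgroup.zsmul_mem
  rw [Submodule.mem_toAddSubgroup, mem_homogeneousSubmodule]
  have := MvPolynomial.IsHomogeneous.prod (Finset.univ : Finset (Fin n))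
    (fun i => (X (f (σ i) i) : MvPolynomial (ℕ × ℕ) ℂ)) (fun _ => 1)
    (fun i _ => isHomogeneous_X _ _)
  simpa using this

open MvPolynomial in
lemma aeval_mul_const_of_isHomogeneous {σ : Type*} (c : MvPolynomial (ℕ × ℕ) ℂ)
    (g : σ → MvPolynomial (ℕ × ℕ) ℂ) (p : MvPolynomial σ ℂ) (n : ℕ)
    (hp : p.IsHomogeneous n) :
    aeval (fun i => c * g i) p = c ^ n * aeval g p := by
  conv_lhs => rw [p.as_sum]
  conv_rhs => rw [p.as_sum]
  rw [map_sum, map_sum, Finset.mul_sum]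
  apply Finset.sum_congr rfl
  intro v hv
  rw [aeval_monomial, aeval_monomial]
  have hdeg : ∑ i ∈ v.support, v i = n := by
    have h := hp (mem_support_iff.mp hv)
    rw [Finsupp.weight_apply, Finsupp.sum] at h
    simpa using h
  rw [Finsupp.prod, Finsupp.prod]
  simp_rw [mul_pow]
  rw [Finset.prod_mul_distrib, Finset.prod_pow_eq_pow_sum, hdeg]
  ring

open MvPolynomial in
lemma genCoord_homogeneousComponent (J : Finset ℕ) (d : ℕ) (hd : 1 ≤ d)
    (r : BracketRing J d) (n : ℕ) :
    genCoord J d (MvPolynomial.homogeneousComponent n r)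
      = MvPolynomial.homogeneousComponent (d * n) (genCoord J d r) := by
  have himg : ∀ S : {S : Finset ℕ // S ⊆ J ∧ S.card = d},
      ((genCoord J d) (X S)).IsHomogeneous d := by
    intro S
    simp only [genCoord, aeval_X]
    exact det_X_isHomogeneous _
  have hhom : ∀ i : ℕ, ((genCoord J d) (homogeneousComponent i r)).IsHomogeneous (d * i) := by
    intro i
    exact (homogeneousComponent_isHomogeneous i r).aeval _
      (fun S => det_X_isHomogeneous _)
  conv_rhs => rw [← MvPolynomial.sum_homogeneousComponent r]
  rw [map_sum, map_sum]
  have hterm : ∀ i : ℕ,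
      homogeneousComponent (d * n) ((genCoord J d) (homogeneousComponent i r))
        = if n = i then (genCoord J d) (homogeneousComponent i r) else 0 := by
    intro i
    rw [homogeneousComponent_of_mem (hhom i)]
    congr 1
    simp [mul_right_inj' (show d ≠ 0 by omega)]
  rw [Finset.sum_congr rfl (fun i _ => hterm i), Finset.sum_ite_eq]
  by_cases hn : n ∈ Finset.range (r.totalDegree + 1)
  · rw [if_pos hn]
  · rw [if_neg hn]
    have : homogeneousComponent n r = 0 :=
      homogeneousComponent_eq_zero _ r (by simp only [Finset.mem_range] at hn; omega)
    rw [this, map_zero]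

open MvPolynomial

theorem lift_respects_bracket_ring_equality (J : Finset ℕ) (d : ℕ) (hd : 1 ≤ d)
    (hJ : d ≤ J.card) (j : ℕ) (hj : j ∉ J)
    (p q : BracketRing J d) (hpq : genCoord J d p = genCoord J d q) :
    genCoord (insert j J) (d + 1) (liftEta J d j p) =
      genCoord (insert j J) (d + 1) (liftEta J d j q) := by
  classical
  set g2 : BracketRing J d →ₐ[ℂ] MvPolynomial (ℕ × ℕ) ℂ :=
    (genCoord (insert j J) (d + 1)).comp (liftEta J d j) with hg2def
  set tauf : ℕ × ℕ → MvPolynomial (ℕ × ℕ) ℂ := fun ik =>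
    X ((d : ℕ), j) * X ik - X (ik.1, j) * X ((d : ℕ), ik.2) with htauf
  have hdeg : ∀ (n : ℕ) (r : BracketRing J d), r.IsHomogeneous n →
      aeval tauf (genCoord J d r)
        = X ((d : ℕ), j) ^ ((d - 1) * n) * g2 r := by
    intro n r hr
    have hcomp : aeval tauf (genCoord J d r)
        = aeval (fun S : {S : Finset ℕ // S ⊆ J ∧ S.card = d} =>
            X ((d : ℕ), j) ^ (d - 1) * g2 (X S)) r := by
      have h1 : aeval tauf (genCoord J d r)
          = ((aeval tauf).comp (genCoord J d)) r := rfl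
      have hfun : (fun S : {S : Finset ℕ // S ⊆ J ∧ S.card = d} =>
          (aeval tauf) ((Matrix.of fun i m : Fin d =>
            (X ((i : ℕ), (S.1.orderEmbOfFin S.2.2 m : ℕ)) : MvPolynomial (ℕ × ℕ) ℂ)).det))
          = fun S => X ((d : ℕ), j) ^ (d - 1) * g2 (X S) := by
        funext S
        have h2 := key_bracket J d hd j hj S
        simp only [genCoord, aeval_X] at h2
        rw [h2]
        rfl
      rw [h1, genCoord, MvPolynomial.comp_aeval, hfun]
    rw [hcomp, aeval_mul_const_of_isHomogeneous _ _ r n hr, ← pow_mul]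
    congr 1
    have : g2 = aeval (g2 ∘ X) := MvPolynomial.aeval_unique g2
    conv_rhs => rw [this]
    rfl
  have hPhi : ∀ n : ℕ, genCoord J d (homogeneousComponent n p)
      = genCoord J d (homogeneousComponent n q) := by
    intro n
    rw [genCoord_homogeneousComponent J d hd, genCoord_homogeneousComponent J d hd, hpq]
  have hXn : (X ((d : ℕ), j) : MvPolynomial (ℕ × ℕ) ℂ) ≠ 0 := MvPolynomial.X_ne_zero _
  have hg2n : ∀ n : ℕ, g2 (homogeneousComponent n p) = g2 (homogeneousComponent n q) := by
    intro n
    have h1 := hdeg n _ (homogeneousComponent_isHomogeneous n p)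
    have h2 := hdeg n _ (homogeneousComponent_isHomogeneous n q)
    have h3 : aeval tauf (genCoord J d (homogeneousComponent n p))
        = aeval tauf (genCoord J d (homogeneousComponent n q)) := by rw [hPhi n]
    rw [h1, h2] at h3
    exact mul_left_cancel₀ (pow_ne_zero _ hXn) h3
  set N : ℕ := max p.totalDegree q.totalDegree + 1 with hN
  have hsum : ∀ r : BracketRing J d, r.totalDegree < N →
      ∑ n ∈ Finset.range N, homogeneousComponent n r = r := by
    intro r hr
    conv_rhs => rw [← MvPolynomial.sum_homogeneousComponent r]
    symm
    apply Finset.sum_subset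
    · intro x hx
      simp only [Finset.mem_range] at hx ⊢
      omega
    · intro x _ hx
      simp only [Finset.mem_range] at hx
      exact homogeneousComponent_eq_zero _ r (by omega)
  have hp' := hsum p (by omega)
  have hq' := hsum q (by omega)
  have : g2 p = g2 q := by
    rw [← hp', ← hq', map_sum, map_sum]
    exact Finset.sum_congr rfl fun n _ => hg2n n
  exact this
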